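/- For any b ∈ GL(n,ℚ) and any m ≥ 1, the groups SL(n,ℤ) and b·SL(n,ℤ)·b^{-1} are commensurable: their intersection has finite index in both. -/

import Mathlib

open Matrix Subgroup

namespace Stmt14Aux

/-- The embedding `SL(n,ℤ) →* GL(n,ℚ)`. -/
def φ (n : ℕ) : Matrix.SpecialLinearGroup (Fin n) ℤ →* Matrix.GeneralLinearGroup (Fin n) ℚ :=
  Matrix.SpecialLinearGroup.toGL.comp
    (Matrix.SpecialLinearGroup.map (n := Fin n) (Int.castRingHom ℚ))

lemma coe_φ {n : ℕ} (γ : Matrix.SpecialLinearGroup (Fin n) ℤ) :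
    ((φ n γ : Matrix.GeneralLinearGroup (Fin n) ℚ) : Matrix (Fin n) (Fin n) ℚ)
      = (γ : Matrix (Fin n) (Fin n) ℤ).map (Int.cast : ℤ → ℚ) := rfl

lemma φ_injective (n : ℕ) : Function.Injective (φ n) := by
  intro x y h
  have h2 := congrArg (fun u : Matrix.GeneralLinearGroup (Fin n) ℚ =>
    (u : Matrix (Fin n) (Fin n) ℚ)) h
  simp only [coe_φ] at h2
  refine Subtype.ext ?_
  ext i j
  have := congrFun (congrFun h2 i) j
  simp only [Matrix.map_apply] at this
  exact_mod_cast this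

lemma den_mul_int (q : ℚ) (d : ℕ) (h : q.den ∣ d) : ∃ z : ℤ, (d : ℚ) * q = (z : ℚ) := by
  obtain ⟨k, hk⟩ := h
  refine ⟨k * q.num, ?_⟩
  have hden : ((q.den : ℚ)) * q = (q.num : ℚ) := by
    have h0 : (q.den : ℚ) ≠ 0 := by exact_mod_cast q.den_ne_zero
    rw [mul_comm]
    nth_rw 1 [← Rat.num_div_den q]
    exact div_mul_cancel₀ _ h0
  subst hk
  push_cast
  rw [mul_comm (q.den : ℚ) (k : ℚ), mul_assoc, hden]

/-- The key half of commensurability. -/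
lemma key {n : ℕ} (b : Matrix.GeneralLinearGroup (Fin n) ℚ) :
    (((φ n).range).map (MulAut.conj b).toMonoidHom).relIndex (φ n).range ≠ 0 := by
  classical
  set B : Matrix (Fin n) (Fin n) ℚ := (b : Matrix (Fin n) (Fin n) ℚ) with hB
  set C : Matrix (Fin n) (Fin n) ℚ := ((b⁻¹ : Matrix.GeneralLinearGroup (Fin n) ℚ) :
      Matrix (Fin n) (Fin n) ℚ) with hC
  -- common denominator
  set d : ℕ := ∏ i : Fin n, ∏ j : Fin n, ((B i j).den * (C i j).den) with hd
  have hd0 : d ≠ 0 := by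
    refine Finset.prod_ne_zero_iff.2 fun i _ => Finset.prod_ne_zero_iff.2 fun j _ => ?_
    exact Nat.mul_ne_zero (B i j).den_ne_zero (C i j).den_ne_zero
  have hBden : ∀ i j : Fin n, ∃ z : ℤ, (d : ℚ) * B i j = (z : ℚ) := by
    intro i j
    refine den_mul_int _ _ ?_
    calc (B i j).den ∣ (B i j).den * (C i j).den := dvd_mul_right _ _
      _ ∣ ∏ j : Fin n, ((B i j).den * (C i j).den) :=
          Finset.dvd_prod_of_mem _ (Finset.mem_univ j)
      _ ∣ d := Finset.dvd_prod_of_mem _ (Finset.mem_univ i)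
  have hCden : ∀ i j : Fin n, ∃ z : ℤ, (d : ℚ) * C i j = (z : ℚ) := by
    intro i j
    refine den_mul_int _ _ ?_
    calc (C i j).den ∣ (B i j).den * (C i j).den := dvd_mul_left _ _
      _ ∣ ∏ j : Fin n, ((B i j).den * (C i j).den) :=
          Finset.dvd_prod_of_mem _ (Finset.mem_univ j)
      _ ∣ d := Finset.dvd_prod_of_mem _ (Finset.mem_univ i)
  set N : ℕ := d * d with hN
  have hN0 : N ≠ 0 := Nat.mul_ne_zero hd0 hd0
  haveI : NeZero N := ⟨hN0⟩
  -- congruence subgroup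
  set K : Subgroup (Matrix.SpecialLinearGroup (Fin n) ℤ) :=
    (Matrix.SpecialLinearGroup.map (n := Fin n) (Int.castRingHom (ZMod N))).ker with hK
  have hKindex : K.index ≠ 0 := by
    rw [hK, Subgroup.index_ker]
    exact Nat.card_pos.ne'
  -- its image in GL(n,ℚ)
  set H : Subgroup (Matrix.GeneralLinearGroup (Fin n) ℚ) := K.map (φ n) with hH
  have hrel : H.relIndex (φ n).range = K.index := by
    have h1 : H.comap (φ n) = K :=
      Subgroup.comap_map_eq_self_of_injective (φ_injective n) K
    have := Subgroup.relIndex_comap (H := H) (φ n) ⊤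
    rw [h1, Subgroup.relIndex_top_right] at this
    rw [MonoidHom.range_eq_map]
    exact this.symm
  -- main inclusion : H ≤ b Γ b⁻¹
  have hle : H ≤ ((φ n).range).map (MulAut.conj b).toMonoidHom := by
    rintro g hg
    rw [hH, Subgroup.mem_map] at hg
    obtain ⟨γ, hγ, rfl⟩ := hg
    -- entries of γ are ≡ 1 mod N
    have hker : Matrix.SpecialLinearGroup.map (n := Fin n) (Int.castRingHom (ZMod N)) γ = 1 := hγ
    have hdvd : ∀ i j : Fin n, (N : ℤ) ∣
        ((γ : Matrix (Fin n) (Fin n) ℤ) i j - (1 : Matrix (Fin n) (Fin n) ℤ) i j) := by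
      intro i j
      rw [← ZMod.intCast_zmod_eq_zero_iff_dvd]
      push_cast
      have := congrArg (fun u : Matrix.SpecialLinearGroup (Fin n) (ZMod N) =>
        (u : Matrix (Fin n) (Fin n) (ZMod N)) i j) hker
      simp only [Matrix.SpecialLinearGroup.map_apply_coe, RingHom.mapMatrix_apply,
        Matrix.map_apply, eq_intCast] at this
      rw [this]
      by_cases hij : i = j <;> simp [Matrix.one_apply, hij]
    choose A hA using hdvd
    set A2 : Matrix (Fin n) (Fin n) ℤ := Matrix.of A with hA2
    set Mγ : Matrix (Fin n) (Fin n) ℚ :=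
      (γ : Matrix (Fin n) (Fin n) ℤ).map (Int.cast : ℤ → ℚ) with hMγ
    set Am : Matrix (Fin n) (Fin n) ℚ := A2.map (Int.cast : ℤ → ℚ) with hAm
    have hMγ1 : Mγ = 1 + (N : ℚ) • Am := by
      ext i j
      simp only [hMγ, hAm, hA2, Matrix.map_apply, Matrix.of_apply, Matrix.add_apply,
        Matrix.smul_apply, smul_eq_mul]
      have h2 : (γ : Matrix (Fin n) (Fin n) ℤ) i j
          = (N : ℤ) * A i j + (1 : Matrix (Fin n) (Fin n) ℤ) i j :=
        sub_eq_iff_eq_add.mp (hA i j)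
      have h1 : ((1 : Matrix (Fin n) (Fin n) ℤ) i j : ℚ) = (1 : Matrix (Fin n) (Fin n) ℚ) i j := by
        by_cases hij : i = j
        · rw [hij]; simp
        · rw [Matrix.one_apply_ne hij, Matrix.one_apply_ne hij]; simp
      rw [h2]
      push_cast [h1]
      ring
    have hCB : C * B = 1 := by
      rw [hC, hB, ← Units.val_mul, inv_mul_cancel, Units.val_one]
    set Q : Matrix (Fin n) (Fin n) ℚ := C * Mγ * B with hQdef
    have hQ1 : Q = 1 + (N : ℚ) • (C * Am * B) := by
      rw [hQdef, hMγ1, mul_add, add_mul, mul_one, hCB, mul_smul_comm, smul_mul_assoc]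
    set S : Subring ℚ := (Int.castRingHom ℚ).range with hS
    have hQmem : ∀ i j, Q i j ∈ S := by
      intro i j
      rw [hQ1]
      have h1 : (1 : Matrix (Fin n) (Fin n) ℚ) i j ∈ S := by
        by_cases hij : i = j
        · rw [hij, Matrix.one_apply_eq]; exact S.one_mem
        · rw [Matrix.one_apply_ne hij]; exact S.zero_mem
      simp only [Matrix.add_apply, Matrix.smul_apply, smul_eq_mul]
      refine S.add_mem h1 ?_
      rw [Matrix.mul_apply, Finset.mul_sum]
      refine S.sum_mem fun k _ => ?_
      rw [Matrix.mul_apply, Finset.sum_mul, Finset.mul_sum]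
      refine S.sum_mem fun l _ => ?_
      have hterm : (N : ℚ) * (C i l * Am l k * B k j)
          = ((d : ℚ) * C i l) * Am l k * ((d : ℚ) * B k j) := by
        rw [hN]; push_cast; ring
      rw [hterm]
      obtain ⟨z1, hz1⟩ := hCden i l
      obtain ⟨z2, hz2⟩ := hBden k j
      rw [hz1, hz2]
      exact S.mul_mem (S.mul_mem ⟨z1, rfl⟩ ⟨A2 l k, rfl⟩) ⟨z2, rfl⟩
    have hQmem' : ∀ i j, ∃ z : ℤ, (z : ℚ) = Q i j := fun i j => hQmem i j
    set Qz : Matrix (Fin n) (Fin n) ℤ := fun i j => (hQmem' i j).choose with hQzdef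
    have hQzc : Qz.map (Int.cast : ℤ → ℚ) = Q := by
      ext i j; exact (hQmem' i j).choose_spec
    have hdetγ : Mγ.det = 1 := by
      have h := RingHom.map_det (Int.castRingHom ℚ) (γ : Matrix (Fin n) (Fin n) ℤ)
      rw [γ.prop] at h
      rw [hMγ]
      have h3 : (γ : Matrix (Fin n) (Fin n) ℤ).map (Int.cast : ℤ → ℚ)
          = (Int.castRingHom ℚ).mapMatrix (γ : Matrix (Fin n) (Fin n) ℤ) := rfl
      rw [h3, ← h]; simp
    have hdetQ : Q.det = 1 := by
      rw [hQdef, Matrix.det_mul, Matrix.det_mul, hdetγ, mul_one, ← Matrix.det_mul, hCB,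
        Matrix.det_one]
    have hdetQz : Qz.det = 1 := by
      have h := RingHom.map_det (Int.castRingHom ℚ) Qz
      rw [show (Int.castRingHom ℚ).mapMatrix Qz = Qz.map (Int.cast : ℤ → ℚ) from rfl, hQzc,
        hdetQ] at h
      rw [eq_intCast] at h
      exact_mod_cast h
    set δ : Matrix.SpecialLinearGroup (Fin n) ℤ := ⟨Qz, hdetQz⟩ with hδdef
    have hφδ : φ n δ = b⁻¹ * (φ n γ) * b := by
      apply Units.ext
      rw [Units.val_mul, Units.val_mul]
      show Qz.map (Int.cast : ℤ → ℚ)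
        = C * ((γ : Matrix (Fin n) (Fin n) ℤ).map (Int.cast : ℤ → ℚ)) * B
      rw [hQzc]
    rw [Subgroup.mem_map]
    refine ⟨φ n δ, ⟨δ, rfl⟩, ?_⟩
    rw [hφδ]
    simp only [MulEquiv.coe_toMonoidHom, MulAut.conj_apply]
    group
  have hdvd2 : (((φ n).range).map (MulAut.conj b).toMonoidHom).relIndex (φ n).range ∣
      H.relIndex (φ n).range := Subgroup.relIndex_dvd_of_le_left _ hle
  intro h0
  rw [h0] at hdvd2
  rw [hrel] at hdvd2
  exact hKindex (Nat.eq_zero_of_zero_dvd hdvd2)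



end Stmt14Aux

open Stmt14Aux in
/-- **Theorem.** For any `b ∈ GL(n,ℚ)` and any `m ≥ 1`, the subgroups `SL(n,ℤ)` and
`b · SL(n,ℤ) · b⁻¹` of `GL(n,ℚ)` are commensurable: their intersection has finite index
in both. -/
theorem stmt14 (n : ℕ) (b : Matrix.GeneralLinearGroup (Fin n) ℚ) (m : ℕ) (hm : 1 ≤ m) :
    Commensurable
      ((Matrix.SpecialLinearGroup.toGL.comp
        (Matrix.SpecialLinearGroup.map (n := Fin n) (Int.castRingHom ℚ))).range)
      (((Matrix.SpecialLinearGroup.toGL.comp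
        (Matrix.SpecialLinearGroup.map (n := Fin n) (Int.castRingHom ℚ))).range).map
          (MulAut.conj b).toMonoidHom) := by
  show Commensurable (φ n).range (((φ n).range).map (MulAut.conj b).toMonoidHom)
  refine ⟨?_, key b⟩
  have e1 : ((φ n).range.map (MulAut.conj b⁻¹).toMonoidHom).comap (MulAut.conj b⁻¹).toMonoidHom
      = (φ n).range :=
    Subgroup.comap_map_eq_self_of_injective (MulAut.conj b⁻¹).injective _
  have e2 : ((φ n).range.map (MulAut.conj b).toMonoidHom).map (MulAut.conj b⁻¹).toMonoidHom
      = (φ n).range := by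
    rw [Subgroup.map_map]
    have h3 : ((MulAut.conj b⁻¹).toMonoidHom).comp ((MulAut.conj b).toMonoidHom)
        = MonoidHom.id _ := by
      ext x
      simp [mul_assoc]
    rw [h3, Subgroup.map_id]
  have h := Subgroup.relIndex_comap (H := (φ n).range.map (MulAut.conj b⁻¹).toMonoidHom)
    (MulAut.conj b⁻¹).toMonoidHom ((φ n).range.map (MulAut.conj b).toMonoidHom)
  rw [e1, e2] at h
  exact h ▸ key b⁻¹
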